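/- Let n, N ≥ 1 and let L be a set of n×n real matrices. Let c_1, …, c_n be n×n real matrices, each commuting with every l ∈ L, and let V_0 ⊆ ℝ^n be an open set such that for every x ∈ V_0 the vectors c_1·x, …, c_n·x are linearly independent in ℝ^n. Fix an index i ∈ {1,…,N} and set V = {(X_1,…,X_N) ∈ (ℝ^n)^N : X_i ∈ V_0}. If f : V → ℝ^n is a differentiable map satisfying the joint equivariance equation for every l ∈ L, then there exist differentiable functions φ¹, …, φⁿ : V → ℝ, each jointly radial for every l ∈ L, such that f(X) = Σ_{j=1}^n φ^j(X)·(c_j·X_i) for every X ∈ V. -/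

import Mathlib

/-- A map `f` satisfies the joint equivariance equation for the matrix `l` at every
point of `U` if `Df(X)(l·X_1, …, l·X_N) = l·f(X)` on `U`. -/
def JointlyEquivariantOn (n N : ℕ) (l : Matrix (Fin n) (Fin n) ℝ)
    (U : Set (Fin N → Fin n → ℝ)) (f : (Fin N → Fin n → ℝ) → (Fin n → ℝ)) : Prop :=
  ∀ X ∈ U, fderiv ℝ f X (fun i => l.mulVec (X i)) = l.mulVec (f X)

/-- A function `φ` is jointly radial for `l` on `U` if `Dφ(X)(l·X_1, …, l·X_N) = 0`
on `U`. -/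
def JointlyRadialOn (n N : ℕ) (l : Matrix (Fin n) (Fin n) ℝ)
    (U : Set (Fin N → Fin n → ℝ)) (φ : (Fin N → Fin n → ℝ) → ℝ) : Prop :=
  ∀ X ∈ U, fderiv ℝ φ X (fun i => l.mulVec (X i)) = 0

/-- Determinant of a matrix-valued differentiable function is differentiable. -/
lemma aux_det_diff {E : Type*} [NormedAddCommGroup E] [NormedSpace ℝ E] {m : ℕ}
    {M : E → Matrix (Fin m) (Fin m) ℝ} {x : E}
    (h : ∀ k j, DifferentiableAt ℝ (fun y => M y k j) x) :
    DifferentiableAt ℝ (fun y => (M y).det) x := by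
  simp only [Matrix.det_apply']
  apply DifferentiableAt.fun_sum
  intro σ _
  apply DifferentiableAt.const_mul
  exact (HasFDerivAt.finset_prod (u := Finset.univ)
    (g := fun k y => M y (σ k) k)
    (g' := fun k => fderiv ℝ (fun y => M y (σ k) k) x)
    (fun k _ => (h (σ k) k).hasFDerivAt)).differentiableAt

/-- Entries of the adjugate of a matrix-valued differentiable function are
differentiable. -/
lemma aux_adj_diff {E : Type*} [NormedAddCommGroup E] [NormedSpace ℝ E] {m : ℕ}
    {M : E → Matrix (Fin m) (Fin m) ℝ} {x : E}
    (h : ∀ k j, DifferentiableAt ℝ (fun y => M y k j) x) (p q : Fin m) :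
    DifferentiableAt ℝ (fun y => (M y).adjugate p q) x := by
  simp only [Matrix.adjugate_apply]
  apply aux_det_diff
  intro k j
  by_cases hk : k = q
  · simpa [Matrix.updateRow_apply, hk] using differentiableAt_const (Pi.single p (1:ℝ) j)
  · simpa [Matrix.updateRow_apply, hk] using h k j

theorem stmt_6 (n N : ℕ) (hn : 1 ≤ n) (hN : 1 ≤ N)
    (L : Set (Matrix (Fin n) (Fin n) ℝ))
    (c : Fin n → Matrix (Fin n) (Fin n) ℝ)
    (hc : ∀ j, ∀ l ∈ L, c j * l = l * c j)
    (V₀ : Set (Fin n → ℝ)) (hV₀ : IsOpen V₀)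
    (hindep : ∀ x ∈ V₀, LinearIndependent ℝ (fun j => (c j).mulVec x))
    (i : Fin N)
    (V : Set (Fin N → Fin n → ℝ)) (hV : V = {X | X i ∈ V₀})
    (f : (Fin N → Fin n → ℝ) → (Fin n → ℝ))
    (hf_diff : ∀ X ∈ V, DifferentiableAt ℝ f X)
    (hf_equiv : ∀ l ∈ L, JointlyEquivariantOn n N l V f) :
    ∃ φ : Fin n → (Fin N → Fin n → ℝ) → ℝ,
      (∀ j, ∀ X ∈ V, DifferentiableAt ℝ (φ j) X) ∧
      (∀ j, ∀ l ∈ L, JointlyRadialOn n N l V (φ j)) ∧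
      (∀ X ∈ V, f X = ∑ j, φ j X • (c j).mulVec (X i)) := by
  subst hV
  have hVopen : IsOpen {X : Fin N → Fin n → ℝ | X i ∈ V₀} :=
    hV₀.preimage (continuous_apply i)
  -- the matrix with columns `c j · X i`
  set B : (Fin N → Fin n → ℝ) → Matrix (Fin n) (Fin n) ℝ :=
    fun X => Matrix.of fun k j => (c j).mulVec (X i) k with hB
  have hBunit : ∀ X ∈ {X : Fin N → Fin n → ℝ | X i ∈ V₀}, IsUnit (B X) := by
    intro X hX
    rw [← Matrix.linearIndependent_cols_iff_isUnit]
    exact hindep (X i) hX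
  set φ : Fin n → (Fin N → Fin n → ℝ) → ℝ :=
    fun j Y => (B Y)⁻¹.mulVec (f Y) j with hφ
  -- the key summation identity
  have hsum : ∀ (X : Fin N → Fin n → ℝ) (y : Fin n → ℝ),
      ∑ j, y j • (c j).mulVec (X i) = (B X).mulVec y := by
    intro X y
    funext k
    simp [Matrix.mulVec, dotProduct, Finset.sum_apply, hB, mul_comm]
  -- the representation
  have hrepr : ∀ X ∈ {X : Fin N → Fin n → ℝ | X i ∈ V₀},
      f X = ∑ j, φ j X • (c j).mulVec (X i) := by
    intro X hX
    rw [hsum]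
    have hdet : IsUnit (B X).det := (Matrix.isUnit_iff_isUnit_det _).mp (hBunit X hX)
    show f X = (B X).mulVec ((B X)⁻¹.mulVec (f X))
    rw [Matrix.mulVec_mulVec, Matrix.mul_nonsing_inv _ hdet, Matrix.one_mulVec]
  -- differentiability of the coefficients
  have hφdiff : ∀ j, ∀ X ∈ {X : Fin N → Fin n → ℝ | X i ∈ V₀},
      DifferentiableAt ℝ (φ j) X := by
    intro j X hX
    have hproj : ∀ t : Fin n, DifferentiableAt ℝ (fun Y : Fin N → Fin n → ℝ => Y i t) X := by
      intro t
      exact ((ContinuousLinearMap.proj (R := ℝ) (φ := fun _ : Fin n => ℝ) t).comp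
        (ContinuousLinearMap.proj (R := ℝ) (φ := fun _ : Fin N => Fin n → ℝ) i)).differentiableAt
    have hBe : ∀ k m, DifferentiableAt ℝ (fun Y => B Y k m) X := by
      intro k m
      have : (fun Y : Fin N → Fin n → ℝ => B Y k m) = fun Y => ∑ t, c m k t * Y i t := by
        funext Y
        simp [hB, Matrix.mulVec, dotProduct]
      rw [this]
      exact DifferentiableAt.fun_sum fun t _ => (differentiableAt_const _).mul (hproj t)
    have hdet : DifferentiableAt ℝ (fun Y => (B Y).det) X := aux_det_diff hBe
    have hdetne : (B X).det ≠ 0 :=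
      ((Matrix.isUnit_iff_isUnit_det _).mp (hBunit X hX)).ne_zero
    have hadj : ∀ p q, DifferentiableAt ℝ (fun Y => (B Y).adjugate p q) X :=
      fun p q => aux_adj_diff hBe p q
    have hfk : ∀ k, DifferentiableAt ℝ (fun Y => f Y k) X := by
      intro k
      exact ((ContinuousLinearMap.proj (R := ℝ) (φ := fun _ : Fin n => ℝ)
        k).differentiableAt).comp X (hf_diff X hX)
    have hrw : φ j = fun Y => ∑ k, (B Y).det⁻¹ * ((B Y).adjugate j k * f Y k) := by
      funext Y
      simp [hφ, Matrix.inv_def, Ring.inverse_eq_inv, Matrix.mulVec, dotProduct,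
        Matrix.smul_apply, smul_eq_mul, Finset.mul_sum, mul_assoc]
    rw [hrw]
    exact DifferentiableAt.fun_sum fun k _ =>
      ((hdet.inv hdetne).mul ((hadj j k).mul (hfk k)))
  refine ⟨φ, hφdiff, ?_, hrepr⟩
  -- joint radiality
  intro j l hl X hX
  set w : Fin N → Fin n → ℝ := fun t => l.mulVec (X t) with hw
  -- the continuous linear maps `Y ↦ c m · Y i`
  set U : Fin n → ((Fin N → Fin n → ℝ) →L[ℝ] (Fin n → ℝ)) :=
    fun m => (LinearMap.toContinuousLinearMap ((c m).mulVecLin)).comp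
      (ContinuousLinearMap.proj (R := ℝ) (φ := fun _ : Fin N => Fin n → ℝ) i) with hU
  have hUapp : ∀ m Y, U m Y = (c m).mulVec (Y i) := by
    intro m Y; simp [hU]
  -- derivative of the representation
  have hg : HasFDerivAt (fun Y => ∑ m, φ m Y • (c m).mulVec (Y i))
      (∑ m, (φ m X • (U m) + (fderiv ℝ (φ m) X).smulRight ((c m).mulVec (X i)))) X := by
    apply HasFDerivAt.fun_sum
    intro m _
    have h1 : HasFDerivAt (φ m) (fderiv ℝ (φ m) X) X := (hφdiff m X hX).hasFDerivAt
    have h2 : HasFDerivAt (fun Y : Fin N → Fin n → ℝ => (c m).mulVec (Y i)) (U m) X :=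
      (U m).hasFDerivAt
    simpa [hUapp] using h1.smul h2
  have hfeq : f =ᶠ[nhds X] fun Y => ∑ m, φ m Y • (c m).mulVec (Y i) :=
    Filter.eventuallyEq_of_mem (hVopen.mem_nhds hX) hrepr
  have hD : HasFDerivAt f
      (∑ m, (φ m X • (U m) + (fderiv ℝ (φ m) X).smulRight ((c m).mulVec (X i)))) X :=
    hg.congr_of_eventuallyEq hfeq
  have hEq := hf_equiv l hl X hX
  rw [hD.fderiv] at hEq
  -- compute both sides
  have hUw : ∀ m, U m w = l.mulVec ((c m).mulVec (X i)) := by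
    intro m
    rw [hUapp]
    show (c m).mulVec (l.mulVec (X i)) = _
    rw [Matrix.mulVec_mulVec, hc m l hl, ← Matrix.mulVec_mulVec]
  have hrhs : l.mulVec (f X) = ∑ m, φ m X • l.mulVec ((c m).mulVec (X i)) := by
    rw [hrepr X hX]
    simp only [← Matrix.mulVecLin_apply, map_sum, map_smul]
  have hlhs : (∑ m, (φ m X • (U m) + (fderiv ℝ (φ m) X).smulRight ((c m).mulVec (X i)))) w
      = ∑ m, (φ m X • l.mulVec ((c m).mulVec (X i))
          + (fderiv ℝ (φ m) X w) • (c m).mulVec (X i)) := by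
    rw [ContinuousLinearMap.sum_apply]
    refine Finset.sum_congr rfl fun m _ => ?_
    rw [ContinuousLinearMap.add_apply, ContinuousLinearMap.smul_apply,
      ContinuousLinearMap.smulRight_apply, hUw]
  have hkey : ∑ m, (fderiv ℝ (φ m) X w) • (c m).mulVec (X i) = 0 := by
    have h2 := hEq
    rw [hlhs, hrhs, Finset.sum_add_distrib] at h2
    exact add_eq_left.mp h2
  have hli := hindep (X i) hX
  rw [linearIndependent_iff'] at hli
  exact hli Finset.univ (fun m => fderiv ℝ (φ m) X w) hkey j (Finset.mem_univ j)
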